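/- (The Casimir element acts as a scalar on harmonic homogeneous polynomials.) Let n ≥ 1 and let p ∈ ℝ[x₁,x₂,x₃] be homogeneous of degree n with Δp = 0. Then (D₀∘D₀ + D₁∘D₁ + D₂∘D₂) p = −n(n+1)·p. -/

import Mathlib

open MvPolynomial

lemma pderiv_pderiv_comm (i j : Fin 3) (p : MvPolynomial (Fin 3) ℝ) :
    pderiv i (pderiv j p) = pderiv j (pderiv i p) := by
  induction p using MvPolynomial.induction_on with
  | C a => simp
  | add p q hp hq => simp [hp, hq]
  | mul_X p k hp => simp only [pderiv_mul, map_add, hp, pderiv_X, Pi.single_apply, apply_ite (pderiv i), apply_ite (pderiv j), pderiv_one, map_zero, ite_self]; ring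

lemma euler {n : ℕ} {p : MvPolynomial (Fin 3) ℝ} (hp : p.IsHomogeneous n) :
    X 0 * pderiv 0 p + X 1 * pderiv 1 p + X 2 * pderiv 2 p = (n : ℝ) • p := by
  conv_lhs => rw [p.as_sum]
  conv_rhs => rw [p.as_sum]
  rw [Finset.smul_sum]
  simp only [map_sum, Finset.mul_sum, ← Finset.sum_add_distrib]
  apply Finset.sum_congr rfl
  intro d hd
  have hdeg : d.degree = n := by
    have := hp (mem_support_iff.mp hd)
    rw [Finsupp.degree_eq_weight_one]; exact this
  have key : ∀ i : Fin 3, X i * pderiv i (monomial d (coeff d p))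
      = ((d i : ℝ)) • monomial d (coeff d p) := by
    intro i
    rw [pderiv_monomial]
    rcases Nat.eq_zero_or_pos (d i) with h | h
    · simp [h]
    · have : Finsupp.single i 1 + (d - Finsupp.single i 1) = d := by
        ext j
        rcases eq_or_ne j i with rfl | hj
        · simp only [Finsupp.coe_add, Finsupp.coe_tsub, Pi.add_apply, Pi.sub_apply, Finsupp.single_eq_same]; omega
        · simp [Finsupp.single_apply, hj.symm, Ne.symm hj]
      calc X i * monomial (d - Finsupp.single i 1) (coeff d p * (d i : ℝ))
          = monomial (Finsupp.single i 1 + (d - Finsupp.single i 1)) (1 * (coeff d p * (d i : ℝ))) := by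
            rw [← monomial_mul, X]
        _ = ((d i : ℝ)) • monomial d (coeff d p) := by
            rw [this, one_mul, smul_monomial, smul_eq_mul, mul_comm]
  rw [key 0, key 1, key 2, ← add_smul, ← add_smul, ← hdeg]
  congr 1
  have : d.degree = d 0 + d 1 + d 2 := by
    rw [Finsupp.degree_apply,
      Finset.sum_subset (d.support.subset_univ)
        (fun i _ hi => Finsupp.notMem_support_iff.mp hi), Fin.sum_univ_three]
  rw [this]
  push_cast
  ring


open MvPolynomial


/-- Directional derivative along `f₀ = (x₂, −x₁, 0)`. -/
noncomputable def D0 : Module.End ℝ (MvPolynomial (Fin 3) ℝ) :=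
  (LinearMap.mulLeft ℝ (X 1 : MvPolynomial (Fin 3) ℝ)).comp (pderiv 0).toLinearMap
    - (LinearMap.mulLeft ℝ (X 0 : MvPolynomial (Fin 3) ℝ)).comp (pderiv 1).toLinearMap

/-- Directional derivative along `f₁ = (x₃, 0, −x₁)`. -/
noncomputable def D1 : Module.End ℝ (MvPolynomial (Fin 3) ℝ) :=
  (LinearMap.mulLeft ℝ (X 2 : MvPolynomial (Fin 3) ℝ)).comp (pderiv 0).toLinearMap
    - (LinearMap.mulLeft ℝ (X 0 : MvPolynomial (Fin 3) ℝ)).comp (pderiv 2).toLinearMap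

/-- Directional derivative along `f₂ = (0, x₃, −x₂)`. -/
noncomputable def D2 : Module.End ℝ (MvPolynomial (Fin 3) ℝ) :=
  (LinearMap.mulLeft ℝ (X 2 : MvPolynomial (Fin 3) ℝ)).comp (pderiv 1).toLinearMap
    - (LinearMap.mulLeft ℝ (X 1 : MvPolynomial (Fin 3) ℝ)).comp (pderiv 2).toLinearMap


/-- The Laplace operator on `ℝ[x₁,x₂,x₃]`. -/
noncomputable def lap (p : MvPolynomial (Fin 3) ℝ) : MvPolynomial (Fin 3) ℝ :=
  pderiv 0 (pderiv 0 p) + pderiv 1 (pderiv 1 p) + pderiv 2 (pderiv 2 p)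

set_option maxHeartbeats 1000000 in
/-- The Casimir operator acts on harmonic homogeneous polynomials of degree `n`
as the scalar `−n(n+1)`. -/
theorem casimir_acts_as_scalar (n : ℕ) (hn : 1 ≤ n) (p : MvPolynomial (Fin 3) ℝ)
    (hp : p.IsHomogeneous n) (hharm : lap p = 0) :
    (D0 ∘ₗ D0 + D1 ∘ₗ D1 + D2 ∘ₗ D2) p = (-((n : ℝ) * (n + 1))) • p := by
  have h := euler hp
  have h0 := congrArg (pderiv 0) h
  have h1 := congrArg (pderiv 1) h
  have h2 := congrArg (pderiv 2) h
  simp only [map_add, pderiv_mul, map_smul, pderiv_X_self, one_mul,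
    pderiv_X_of_ne (show (1:Fin 3) ≠ 0 by decide),
    pderiv_X_of_ne (show (2:Fin 3) ≠ 0 by decide),
    pderiv_X_of_ne (show (0:Fin 3) ≠ 1 by decide),
    pderiv_X_of_ne (show (2:Fin 3) ≠ 1 by decide),
    pderiv_X_of_ne (show (0:Fin 3) ≠ 2 by decide),
    pderiv_X_of_ne (show (1:Fin 3) ≠ 2 by decide), zero_mul, add_zero, zero_add] at h0 h1 h2
  rw [lap] at hharm
  simp only [D0, D1, D2, LinearMap.add_apply, LinearMap.comp_apply, LinearMap.sub_apply,
    LinearMap.mulLeft_apply, Derivation.coeFn_coe, map_sub, pderiv_mul, pderiv_X_self, one_mul,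
    pderiv_X_of_ne (show (1:Fin 3) ≠ 0 by decide),
    pderiv_X_of_ne (show (2:Fin 3) ≠ 0 by decide),
    pderiv_X_of_ne (show (0:Fin 3) ≠ 1 by decide),
    pderiv_X_of_ne (show (2:Fin 3) ≠ 1 by decide),
    pderiv_X_of_ne (show (0:Fin 3) ≠ 2 by decide),
    pderiv_X_of_ne (show (1:Fin 3) ≠ 2 by decide), zero_mul, add_zero, zero_add]
  rw [pderiv_pderiv_comm 1 0 p, pderiv_pderiv_comm 2 0 p, pderiv_pderiv_comm 2 1 p] at *
  simp only [smul_eq_C_mul, pderiv_C_mul, map_neg, map_mul, map_add, map_one] at h h0 h1 h2 ⊢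
  linear_combination (X 0^2 + X 1^2 + X 2^2) * hharm - X 0 * h0 - X 1 * h1 - X 2 * h2
    - (C (n:ℝ) + 1) * h
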